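/- Let G be a group and D(G) the inductive family: S ∈ D(G) if S ∩ S⁻¹ ≠ ∅, closed under T ∪ {a}, T ∪ {b} ∈ D(G) ⟹ T ∪ {a*b} ∈ D(G). If S ⊆ G satisfies S ∉ D(G) and {a} ∉ D(G) for every a ∈ G \ {e}, then there is a right order of G whose positive cone contains S, i.e. a subsemigroup P ⊇ S with e ∉ P and P ∪ P⁻¹ = G \ {e}. -/

import Mathlib

/-- The inductive family `D(G)` of subsets of a group `G`: a set is in `D(G)` if it meets
its own set of inverses, and the family is closed under the rule
`T ∪ {a}, T ∪ {b} ∈ D(G) ⟹ T ∪ {a*b} ∈ D(G)`. -/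
inductive RightD {G : Type*} [Group G] : Set G → Prop
  | base (S : Set G) (a : G) (ha : a ∈ S) (hinv : a⁻¹ ∈ S) : RightD S
  | step (T : Set G) (a b : G) (h1 : RightD (T ∪ {a})) (h2 : RightD (T ∪ {b})) :
      RightD (T ∪ {a * b})

theorem rightD_mono {G : Type*} [Group G] : ∀ {S T : Set G}, RightD S → S ⊆ T → RightD T := by
  intro S T h
  induction h generalizing T with
  | base S a ha hinv => exact fun hsub => RightD.base T a (hsub ha) (hsub hinv)
  | step U a b h1 h2 ih1 ih2 =>
    intro hsub
    have hU : U ⊆ T := (Set.subset_union_left).trans hsub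
    have hab : a * b ∈ T := hsub (Set.mem_union_right _ rfl)
    have hTeq : T = T ∪ {a * b} := by
      rw [Set.union_eq_self_of_subset_right (Set.singleton_subset_iff.mpr hab)]
    rw [hTeq]
    exact RightD.step T a b (ih1 (Set.union_subset_union_left _ hU))
      (ih2 (Set.union_subset_union_left _ hU))

theorem rightD_finite {G : Type*} [Group G] {S : Set G} (h : RightD S) :
    ∃ F : Set G, F ⊆ S ∧ F.Finite ∧ RightD F := by
  induction h with
  | base S a ha hinv =>
    refine ⟨{a, a⁻¹}, ?_, Set.Finite.insert a (Set.finite_singleton a⁻¹), ?_⟩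
    · intro x hx; rcases hx with h | h
      · exact h ▸ ha
      · exact h ▸ hinv
    · exact RightD.base _ a (by simp) (by simp)
  | step T a b h1 h2 ih1 ih2 =>
    obtain ⟨F1, hF1s, hF1f, hF1⟩ := ih1
    obtain ⟨F2, hF2s, hF2f, hF2⟩ := ih2
    refine ⟨((F1 ∪ F2) ∩ T) ∪ {a * b}, ?_, ?_, ?_⟩
    · exact Set.union_subset_union_left _ Set.inter_subset_right
    · exact (((hF1f.union hF2f).inter_of_left _).union (Set.finite_singleton _))
    · refine RightD.step _ a b (rightD_mono hF1 ?_) (rightD_mono hF2 ?_)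
      · intro x hx
        rcases hF1s hx with h | h
        · exact Or.inl ⟨Set.mem_union_left _ hx, h⟩
        · exact Or.inr h
      · intro x hx
        rcases hF2s hx with h | h
        · exact Or.inl ⟨Set.mem_union_right _ hx, h⟩
        · exact Or.inr h

theorem chain_finite_sub {G : Type*} [Group G] {c : Set (Set G)} (hc : IsChain (· ⊆ ·) c)
    (hne : c.Nonempty) {F : Set G} (hF : F.Finite) :
    F ⊆ ⋃₀ c → ∃ t ∈ c, F ⊆ t := by
  refine Set.Finite.induction_on (motive := fun s _ => s ⊆ ⋃₀ c → ∃ t ∈ c, s ⊆ t) F hF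
    (fun _ => ⟨hne.choose, hne.choose_spec, Set.empty_subset _⟩)
    (fun {a s} _ _ ih hsub => ?_)
  obtain ⟨t, htc, hts⟩ := ih ((Set.subset_insert a s).trans hsub)
  obtain ⟨u, huc, hau⟩ := hsub (Set.mem_insert a s)
  rcases hc.total htc huc with h | h
  · exact ⟨u, huc, Set.insert_subset hau (hts.trans h)⟩
  · exact ⟨t, htc, Set.insert_subset (h hau) hts⟩

theorem exists_comonoid {G : Type*} [Group G] {S : Set G} (hS : ¬ RightD S) :
    ∃ C : Set G, (1 : G) ∈ C ∧ (∀ x ∈ C, ∀ y ∈ C, x * y ∈ C) ∧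
      (∀ g : G, g ∈ C ∨ g⁻¹ ∈ C) ∧ ∀ s ∈ S, s ∉ C := by
  obtain ⟨P, hSP, ⟨hSP', hPD⟩, hmax⟩ :=
    zorn_subset_nonempty {T : Set G | S ⊆ T ∧ ¬ RightD T} (fun c hcs hchain hcne => by
      refine ⟨⋃₀ c, ⟨?_, ?_⟩, fun s hs => Set.subset_sUnion_of_mem hs⟩
      · obtain ⟨t, ht⟩ := hcne
        exact (hcs ht).1.trans (Set.subset_sUnion_of_mem ht)
      · intro hD
        obtain ⟨F, hFs, hFf, hF⟩ := rightD_finite hD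
        obtain ⟨t, htc, hFt⟩ := chain_finite_sub hchain hcne hFf hFs
        exact (hcs htc).2 (rightD_mono hF hFt)) S ⟨subset_rfl, hS⟩
  have hnotin : ∀ x : G, x ∉ P → RightD (P ∪ {x}) := by
    intro x hx
    by_contra hnd
    exact hx (hmax ⟨hSP'.trans Set.subset_union_left, hnd⟩ Set.subset_union_left
      (Set.mem_union_right _ rfl))
  refine ⟨Pᶜ, ?_, ?_, ?_, fun s hs hsc => hsc (hSP' hs)⟩
  · intro h1P
    exact hPD (RightD.base P 1 h1P (by simpa using h1P))
  · intro x hx y hy hxy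
    have hx' := hnotin x hx
    have hy' := hnotin y hy
    have := RightD.step P x y hx' hy'
    rw [Set.union_eq_self_of_subset_right (Set.singleton_subset_iff.mpr hxy)] at this
    exact hPD this
  · intro g
    by_contra h
    push_neg at h
    simp only [Set.mem_compl_iff, not_not] at h
    exact hPD (RightD.base P g h.1 h.2)

theorem stmt11 {G : Type*} [Group G] {S : Set G} (hS : ¬ RightD S)
    (hsingle : ∀ a : G, a ≠ 1 → ¬ RightD ({a} : Set G)) :
    ∃ P : Set G, S ⊆ P ∧ (∀ a ∈ P, ∀ b ∈ P, a * b ∈ P) ∧ (1 : G) ∉ P ∧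
      (∀ a : G, a ≠ 1 → a ∈ P ∨ a⁻¹ ∈ P) := by
  classical
  obtain ⟨C₀, h1C₀, hmulC₀, htotC₀, hSC₀⟩ := exists_comonoid hS
  -- family of total submonoids disjoint from S
  set Fam : Set (Set G) :=
    {C | (1 : G) ∈ C ∧ (∀ x ∈ C, ∀ y ∈ C, x * y ∈ C) ∧ (∀ g : G, g ∈ C ∨ g⁻¹ ∈ C) ∧
      ∀ s ∈ S, s ∉ C} with hFam
  obtain ⟨C, -, ⟨h1C, hmulC, htotC, hSC⟩, hmin⟩ :=
    zorn_superset_nonempty Fam (fun c hcs hchain hcne => by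
      refine ⟨⋂₀ c, ⟨?_, ?_, ?_, ?_⟩, fun s hs => Set.sInter_subset_of_mem hs⟩
      · exact Set.mem_sInter.mpr fun t ht => (hcs ht).1
      · intro x hx y hy
        exact Set.mem_sInter.mpr fun t ht =>
          (hcs ht).2.1 x (Set.mem_sInter.mp hx t ht) y (Set.mem_sInter.mp hy t ht)
      · intro g
        by_contra h
        push_neg at h
        obtain ⟨hg, hginv⟩ := h
        obtain ⟨A, hAc, hgA⟩ := by
          simpa [Set.mem_sInter] using hg
        obtain ⟨B, hBc, hgB⟩ := by
          simpa [Set.mem_sInter] using hginv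
        rcases hchain.total hAc hBc with hle | hle
        · rcases (hcs hAc).2.2.1 g with h' | h'
          · exact hgA h'
          · exact hgB (hle h')
        · rcases (hcs hBc).2.2.1 g with h' | h'
          · exact hgA (hle h')
          · exact hgB h'
      · obtain ⟨t, ht⟩ := hcne
        exact fun s hs hmem => (hcs ht).2.2.2 s hs (Set.sInter_subset_of_mem ht hmem))
      C₀ ⟨h1C₀, hmulC₀, htotC₀, hSC₀⟩
  -- C ∩ C⁻¹ = {1}
  have htriv : ∀ g : G, g ∈ C → g⁻¹ ∈ C → g = 1 := by
    intro a haC hainvC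
    by_contra hane
    obtain ⟨Ca, h1Ca, hmulCa, htotCa, haCa'⟩ := exists_comonoid (hsingle a hane)
    have haCa : a ∉ Ca := haCa' a rfl
    set C' : Set G := {g ∈ C | g⁻¹ ∉ C} ∪ {g | g ∈ C ∧ g⁻¹ ∈ C ∧ g ∈ Ca} with hC'
    have hC'sub : C' ⊆ C := by
      rintro x (⟨hx, -⟩ | ⟨hx, -, -⟩) <;> exact hx
    have hC'mem : C' ∈ Fam := by
      refine ⟨Or.inr ⟨h1C, by simpa using h1C, h1Ca⟩, ?_, ?_, fun s hs hmem => hSC s hs (hC'sub hmem)⟩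
      · intro x hx y hy
        have hxC : x ∈ C := hC'sub hx
        have hyC : y ∈ C := hC'sub hy
        have hxyC : x * y ∈ C := hmulC x hxC y hyC
        by_cases hinv : (x * y)⁻¹ ∈ C
        · -- then x and y are both in the subgroup part
          have hxinv : x⁻¹ ∈ C := by
            have : y * (x * y)⁻¹ ∈ C := hmulC y hyC _ hinv
            simpa [mul_inv_rev, mul_assoc] using this
          have hyinv : y⁻¹ ∈ C := by
            have : (x * y)⁻¹ * x ∈ C := hmulC _ hinv x hxC
            simpa [mul_inv_rev, mul_assoc] using this
          have hxCa : x ∈ Ca := by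
            rcases hx with ⟨-, hbad⟩ | ⟨-, -, h⟩
            · exact absurd hxinv hbad
            · exact h
          have hyCa : y ∈ Ca := by
            rcases hy with ⟨-, hbad⟩ | ⟨-, -, h⟩
            · exact absurd hyinv hbad
            · exact h
          exact Or.inr ⟨hxyC, hinv, hmulCa x hxCa y hyCa⟩
        · exact Or.inl ⟨hxyC, hinv⟩
      · intro g
        by_contra h
        push_neg at h
        obtain ⟨hg, hginv⟩ := h
        rcases htotC g with hgC | hgC
        · by_cases hinv : g⁻¹ ∈ C
          · -- g in subgroup part
            rcases htotCa g with hgCa | hgCa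
            · exact hg (Or.inr ⟨hgC, hinv, hgCa⟩)
            · exact hginv (Or.inr ⟨hinv, by simpa using hgC, hgCa⟩)
          · exact hg (Or.inl ⟨hgC, hinv⟩)
        · by_cases hinv : g ∈ C
          · rcases htotCa g with hgCa | hgCa
            · exact hg (Or.inr ⟨hinv, hgC, hgCa⟩)
            · exact hginv (Or.inr ⟨hgC, by simpa using hinv, hgCa⟩)
          · exact hginv (Or.inl ⟨hgC, by simpa using hinv⟩)
    have : C ⊆ C' := hmin hC'mem hC'sub
    rcases this haC with ⟨-, hbad⟩ | ⟨-, -, hbad⟩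
    · exact hbad hainvC
    · exact haCa hbad
  -- final cone
  refine ⟨Cᶜ, fun s hs => hSC s hs, ?_, by simpa using h1C, ?_⟩
  · intro a ha b hb
    intro habC
    have hainv : a⁻¹ ∈ C := (htotC a).resolve_left ha
    have hbinv : b⁻¹ ∈ C := (htotC b).resolve_left hb
    have habinv : (a * b)⁻¹ ∈ C := by
      have := hmulC _ hbinv _ hainv
      simpa [mul_inv_rev] using this
    have : a = b⁻¹ := by
      have h1 : a * b = 1 := htriv _ habC habinv
      rw [← inv_eq_iff_mul_eq_one] at h1
      rw [← h1, inv_inv]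
    exact hb (inv_eq_iff_eq_inv.mpr this ▸ hainv)
  · intro a hane
    by_contra h
    push_neg at h
    simp only [Set.mem_compl_iff, not_not] at h
    exact hane (htriv a h.1 h.2)
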